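/- For every ρ ∈ T the set ℰ_ρ = {p ∈ P(T) : ρ ∈ uᵖ} is dense in P(T); that is, every condition of P(T) has an extension q with ρ ∈ u^q. -/

import Mathlib

universe u

open Cardinal Ordinal Set Classical

noncomputable def omega1 : Ordinal.{u} := (Cardinal.aleph 1).ord

/-- The ordinal below `ω₁` coded by an element of `omega1.toType`. -/
noncomputable def oVal (γ : omega1.{0}.ToType) : Ordinal.{0} :=
  ((Ordinal.ToType.mk (o := omega1.{0})).symm γ : Set.Iio omega1.{0})

/-- `ht γ`: the unique `α` with `ω·α ≤ γ < ω·α + ω`, i.e. `γ / ω`. -/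
noncomputable def htOf (γ : omega1.{0}.ToType) : Ordinal.{0} := oVal γ / Ordinal.omega0

/-- Codes for the nodes of `T`: partial functions on `ω₁` with values in `ω₁`,
representing functions `ρ : β → ω₁` for countable ordinals `β = lg ρ`. -/
abbrev Sseq : Type := omega1.{0}.ToType → Option omega1.{0}.ToType

/-- A code is a genuine sequence if its domain is a proper initial segment of `ω₁`. -/
def IsSeqOK (ρ : Sseq) : Prop :=
  (∀ ξ η : omega1.{0}.ToType, ξ < η → ρ η ≠ none → ρ ξ ≠ none) ∧ ∃ ξ, ρ ξ = none

/-- The length of a sequence: the least point where it is undefined. -/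
noncomputable def lg (ρ : Sseq) : Ordinal.{0} := sInf (oVal '' {ξ | ρ ξ = none})

/-- The (non-strict) extension order on sequences. -/
def seqLE (ρ τ : Sseq) : Prop := ∀ ξ a, ρ ξ = some a → τ ξ = some a

/-- The strict extension order on sequences. -/
def seqLT (ρ τ : Sseq) : Prop := seqLE ρ τ ∧ ρ ≠ τ

/-- `ρ ∩ τ`: the longest common initial segment of `ρ` and `τ`. -/
noncomputable def meetSeq (ρ τ : Sseq) : Sseq :=
  fun ξ => if ∀ η, η ≤ ξ → ρ η = τ η then ρ ξ else none

/-- The restriction of `ρ` to the initial segment below `b`. -/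
noncomputable def restrictSeq (ρ : Sseq) (b : omega1.{0}.ToType) : Sseq :=
  fun ξ => if ξ < b then ρ ξ else none

/-- The empty sequence. -/
def emptySeq : Sseq := fun _ => none

/-- The ambient tree `T` of the forcing `P(T)`: a set of sequences of countable length,
containing the empty sequence, closed under restrictions to initial segments, of
cardinality `ℵ₁`, ordered by strict extension, with no uncountable chain. -/
def PAmbientOK (Tc : Set Sseq) : Prop :=
  (∀ ρ ∈ Tc, IsSeqOK ρ) ∧
  emptySeq ∈ Tc ∧
  (∀ ρ ∈ Tc, ∀ b : omega1.{0}.ToType, restrictSeq ρ b ∈ Tc) ∧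
  Cardinal.mk Tc = Cardinal.aleph.{0} 1 ∧
  ∀ C ⊆ Tc, (∀ ρ ∈ C, ∀ τ ∈ C, ρ ≠ τ → seqLE ρ τ ∨ seqLE τ ρ) → C.Countable

/-- A condition of the forcing `P(T)`. -/
structure PCond : Type where
  u : Finset Sseq
  v : Finset omega1.{0}.ToType
  lt : omega1.{0}.ToType → omega1.{0}.ToType → Prop
  f : Sseq → Option omega1.{0}.ToType
  c : omega1.{0}.ToType → Option ℕ

/-- The requirements making `p` a condition of `P(T)`. -/
structure PValid (Tc : Set Sseq) (p : PCond) : Prop where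
  u_sub : ∀ ρ ∈ p.u, ρ ∈ Tc
  u_root : emptySeq ∈ p.u
  u_meet : ∀ ρ ∈ p.u, ∀ τ ∈ p.u, meetSeq ρ τ ∈ p.u
  lt_dom : ∀ a b, p.lt a b → a ∈ p.v ∧ b ∈ p.v
  lt_irrefl : ∀ a, ¬ p.lt a a
  lt_trans : ∀ a b c, p.lt a b → p.lt b c → p.lt a c
  lt_ht : ∀ a b, p.lt a b → htOf a < htOf b
  lt_pred_linear : ∀ a b c, p.lt a c → p.lt b c → p.lt a b ∨ p.lt b a ∨ a = b
  f_dom : ∀ ρ : Sseq, p.f ρ ≠ none ↔ ρ ∈ p.u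
  f_ran : ∀ ρ a, p.f ρ = some a → a ∈ p.v
  f_surj : ∀ a ∈ p.v, ∃ ρ ∈ p.u, p.f ρ = some a
  f_mono : ∀ ρ ∈ p.u, ∀ τ ∈ p.u, seqLT ρ τ →
    ∀ a b, p.f ρ = some a → p.f τ = some b → p.lt a b
  f_ht : ∀ ρ a, p.f ρ = some a → htOf a = lg ρ
  c_dom : ∀ a, p.c a ≠ none ↔ a ∈ p.v
  c_spec : ∀ a b, p.lt a b → p.c a ≠ p.c b

/-- The extension order of `P(T)`. -/
def PLe (p q : PCond) : Prop :=
  p.u ⊆ q.u ∧ p.v ⊆ q.v ∧ (∀ a b, p.lt a b → q.lt a b) ∧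
  (∀ ρ a, p.f ρ = some a → q.f ρ = some a) ∧
  ∀ a n, p.c a = some n → q.c a = some n

/-! ### Basic lemmas -/

abbrev Om : Type := omega1.{0}.ToType

lemma oVal_lt_iff {γ δ : Om} : oVal γ < oVal δ ↔ γ < δ := by
  unfold oVal
  rw [Subtype.coe_lt_coe, OrderIso.lt_iff_lt]

lemma oVal_injective : Function.Injective oVal := by
  intro γ δ h
  unfold oVal at h
  exact (Ordinal.ToType.mk (o := omega1.{0})).symm.injective (Subtype.coe_injective h)

lemma oVal_lt_omega1 (γ : Om) : oVal γ < omega1.{0} :=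
  ((Ordinal.ToType.mk (o := omega1.{0})).symm γ).2

lemma oVal_enum {β : Ordinal.{0}} (h : β < omega1.{0}) :
    oVal ((Ordinal.ToType.mk (o := omega1.{0})) ⟨β, h⟩) = β := by
  unfold oVal
  rw [OrderIso.symm_apply_apply]

lemma exists_lg_witness {ρ : Sseq} (h : IsSeqOK ρ) : ∃ ξ, ρ ξ = none ∧ oVal ξ = lg ρ := by
  obtain ⟨ξ₀, hξ₀⟩ := h.2
  have hne : (oVal '' {ξ | ρ ξ = none}).Nonempty := ⟨oVal ξ₀, ⟨ξ₀, hξ₀, rfl⟩⟩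
  have hmem := csInf_mem hne
  obtain ⟨ξ, hξ, hv⟩ := hmem
  exact ⟨ξ, hξ, hv⟩

lemma mem_dom_iff {ρ : Sseq} (h : IsSeqOK ρ) {ξ : Om} : ρ ξ ≠ none ↔ oVal ξ < lg ρ := by
  obtain ⟨ξ₀, h0, hv⟩ := exists_lg_witness h
  constructor
  · intro hne
    by_contra hlt
    rw [not_lt, ← hv] at hlt
    have hle : ξ₀ ≤ ξ := by
      rcases le_or_gt ξ₀ ξ with h' | h'
      · exact h'
      · exact absurd hlt (not_le.mpr (oVal_lt_iff.mpr h'))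
    rcases eq_or_lt_of_le hle with rfl | hlt'
    · exact hne h0
    · exact h.1 ξ₀ ξ hlt' hne h0
  · intro hlt hne
    have : lg ρ ≤ oVal ξ := csInf_le (OrderBot.bddBelow _) ⟨ξ, hne, rfl⟩
    exact absurd hlt (not_lt.mpr this)

lemma none_iff_lg_le {ρ : Sseq} (h : IsSeqOK ρ) {ξ : Om} : ρ ξ = none ↔ lg ρ ≤ oVal ξ := by
  rw [← not_lt, ← mem_dom_iff h, not_not]

lemma lg_lt_omega1 {ρ : Sseq} (h : IsSeqOK ρ) : lg ρ < omega1.{0} := by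
  obtain ⟨ξ, _, hv⟩ := exists_lg_witness h
  exact hv ▸ oVal_lt_omega1 ξ

lemma seqLE_refl (ρ : Sseq) : seqLE ρ ρ := fun _ _ h => h

lemma seqLE_trans {ρ τ μ : Sseq} (h1 : seqLE ρ τ) (h2 : seqLE τ μ) : seqLE ρ μ :=
  fun ξ a h => h2 ξ a (h1 ξ a h)

lemma seqLE_antisymm {ρ τ : Sseq} (h1 : seqLE ρ τ) (h2 : seqLE τ ρ) : ρ = τ := by
  funext ξ
  cases hρ : ρ ξ with
  | none =>
    cases hτ : τ ξ with
    | none => rfl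
    | some a => exact absurd (h2 ξ a hτ) (by rw [hρ]; simp)
  | some a => rw [h1 ξ a hρ]

lemma lg_mono {ρ τ : Sseq} (hρ : IsSeqOK ρ) (hτ : IsSeqOK τ) (h : seqLE ρ τ) :
    lg ρ ≤ lg τ := by
  by_contra hlt
  rw [not_le] at hlt
  obtain ⟨ξ₀, h0, hv⟩ := exists_lg_witness hτ
  have : ρ ξ₀ ≠ none := (mem_dom_iff hρ).mpr (by rw [hv]; exact hlt)
  obtain ⟨a, ha⟩ := Option.ne_none_iff_exists'.mp this
  rw [h ξ₀ a ha] at h0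
  exact Option.some_ne_none a h0

lemma seqLE_eq_of_lg_le {ρ τ : Sseq} (hρ : IsSeqOK ρ) (hτ : IsSeqOK τ) (h : seqLE ρ τ)
    (hl : lg τ ≤ lg ρ) : ρ = τ := by
  refine seqLE_antisymm h (fun ξ a hτξ => ?_)
  have : oVal ξ < lg ρ := lt_of_lt_of_le ((mem_dom_iff hτ).mp (by rw [hτξ]; simp)) hl
  obtain ⟨b, hb⟩ := Option.ne_none_iff_exists'.mp ((mem_dom_iff hρ).mpr this)
  rw [h ξ b hb] at hτξ
  rw [hb, Option.some_inj.mp hτξ]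

lemma seqLT_lg_lt {ρ τ : Sseq} (hρ : IsSeqOK ρ) (hτ : IsSeqOK τ) (h : seqLT ρ τ) :
    lg ρ < lg τ := by
  refine lt_of_le_of_ne (lg_mono hρ hτ h.1) (fun e => h.2 ?_)
  exact seqLE_eq_of_lg_le hρ hτ h.1 e.ge

lemma seqLT_trans' {ρ τ μ : Sseq} (h1 : seqLT ρ τ) (h2 : seqLT τ μ) : seqLT ρ μ := by
  refine ⟨seqLE_trans h1.1 h2.1, fun e => h2.2 ?_⟩
  subst e
  exact seqLE_antisymm h2.1 h1.1

lemma seqLE_comparable {ρ τ μ : Sseq} (hρ : IsSeqOK ρ) (hτ : IsSeqOK τ)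
    (h1 : seqLE ρ μ) (h2 : seqLE τ μ) : seqLE ρ τ ∨ seqLE τ ρ := by
  have key : ∀ a b : Sseq, IsSeqOK a → IsSeqOK b → seqLE a μ → seqLE b μ →
      lg a ≤ lg b → seqLE a b := by
    intro a b ha hb haμ hbμ hl ξ x hx
    have : oVal ξ < lg b := lt_of_lt_of_le ((mem_dom_iff ha).mp (by rw [hx]; simp)) hl
    obtain ⟨y, hy⟩ := Option.ne_none_iff_exists'.mp ((mem_dom_iff hb).mpr this)
    have e1 := haμ ξ x hx
    have e2 := hbμ ξ y hy
    rw [e1] at e2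
    rw [hy, Option.some_inj.mp e2]
  rcases le_total (lg ρ) (lg τ) with hl | hl
  · exact Or.inl (key ρ τ hρ hτ h1 h2 hl)
  · exact Or.inr (key τ ρ hτ hρ h2 h1 hl)

/-! ### meetSeq lemmas -/

lemma meetSeq_le_left {ρ τ : Sseq} : seqLE (meetSeq ρ τ) ρ := by
  intro ξ a h
  unfold meetSeq at h
  split at h
  · exact h
  · exact (Option.some_ne_none a h.symm).elim

lemma meetSeq_comm (ρ τ : Sseq) : meetSeq ρ τ = meetSeq τ ρ := by
  funext ξ
  unfold meetSeq
  by_cases hc : ∀ η, η ≤ ξ → ρ η = τ η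
  · rw [if_pos hc, if_pos (fun η hη => (hc η hη).symm), hc ξ le_rfl]
  · rw [if_neg hc, if_neg (fun hc' => hc (fun η hη => (hc' η hη).symm))]

lemma meetSeq_le_right {ρ τ : Sseq} : seqLE (meetSeq ρ τ) τ := by
  rw [meetSeq_comm]
  exact meetSeq_le_left

lemma le_meetSeq {x ρ τ : Sseq} (hx : IsSeqOK x) (h1 : seqLE x ρ) (h2 : seqLE x τ) :
    seqLE x (meetSeq ρ τ) := by
  intro ξ a h
  unfold meetSeq
  rw [if_pos]
  · exact h1 ξ a h
  · intro η hη
    have hne : x η ≠ none := by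
      rcases eq_or_lt_of_le hη with rfl | hlt
      · rw [h]; simp
      · exact hx.1 η ξ hlt (by rw [h]; simp)
    obtain ⟨b, hb⟩ := Option.ne_none_iff_exists'.mp hne
    rw [h1 η b hb, h2 η b hb]

lemma meetSeq_self (ρ : Sseq) : meetSeq ρ ρ = ρ := by
  funext ξ
  unfold meetSeq
  rw [if_pos (fun _ _ => rfl)]

lemma meetSeq_eq_left {ρ τ : Sseq} (hρ : IsSeqOK ρ) (h : seqLE ρ τ) : meetSeq ρ τ = ρ :=
  seqLE_antisymm meetSeq_le_left (le_meetSeq hρ (seqLE_refl ρ) h)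

lemma meetSeq_mem {Tc : Set Sseq} (hT : PAmbientOK Tc) {ρ τ : Sseq} (hρ : ρ ∈ Tc)
    (hτ : τ ∈ Tc) : meetSeq ρ τ ∈ Tc := by
  by_cases hall : ∀ η, ρ η = τ η
  · have : meetSeq ρ τ = ρ := by
      funext ξ
      unfold meetSeq
      rw [if_pos (fun η _ => hall η)]
    rw [this]; exact hρ
  · push_neg at hall
    obtain ⟨b, hb, hmin⟩ := (wellFounded_lt (α := Om)).has_min {η | ρ η ≠ τ η} hall
    have : meetSeq ρ τ = restrictSeq ρ b := by
      funext ξ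
      unfold meetSeq restrictSeq
      by_cases hξ : ξ < b
      · rw [if_pos hξ, if_pos]
        intro η hη
        by_contra hne
        exact hmin η hne (lt_of_le_of_lt hη hξ)
      · rw [if_neg hξ, if_neg]
        intro hc
        exact hb (hc b (not_lt.mp hξ))
    rw [this]
    exact hT.2.2.1 ρ hρ b

/-! ### Fresh ordinals and colors -/

lemma exists_fresh (α : Ordinal.{0}) (hα : α < omega1.{0}) (v : Finset Om) :
    ∃ a : Om, a ∉ v ∧ htOf a = α := by
  have key : ∀ n : ℕ, Ordinal.omega0 * α + n < omega1.{0} := by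
    intro n
    rw [omega1, Cardinal.lt_ord] at *
    rw [Ordinal.card_add, Ordinal.card_mul, Ordinal.card_omega0, Ordinal.card_nat]
    exact Cardinal.add_lt_of_lt (Cardinal.aleph0_le_aleph 1)
      (Cardinal.mul_lt_of_lt (Cardinal.aleph0_le_aleph 1)
        (by rw [← Cardinal.aleph_zero]; exact Cardinal.aleph_lt_aleph.mpr zero_lt_one) hα)
      ((Cardinal.nat_lt_aleph0 n).trans
        (by rw [← Cardinal.aleph_zero]; exact Cardinal.aleph_lt_aleph.mpr zero_lt_one))
  set g : ℕ → Om := fun n => (Ordinal.ToType.mk (o := omega1.{0})) ⟨_, key n⟩ with hg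
  have hginj : Function.Injective g := by
    intro m n h
    have := (Ordinal.ToType.mk (o := omega1.{0})).injective h
    replace this : Ordinal.omega0 * α + (m : Ordinal.{0}) = Ordinal.omega0 * α + n :=
      congrArg Subtype.val this
    rw [add_right_inj] at this
    exact_mod_cast this
  obtain ⟨a, ⟨n, rfl⟩, hav⟩ :=
    (Set.infinite_range_of_injective hginj).exists_notMem_finset v
  refine ⟨g n, hav, ?_⟩
  unfold htOf
  rw [hg]
  simp only
  rw [oVal_enum, Ordinal.mul_add_div _ Ordinal.omega0_ne_zero,
    Ordinal.div_eq_zero_of_lt (Ordinal.nat_lt_omega0 n), add_zero]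

lemma exists_fresh_color (p : PCond) : ∃ n : ℕ, ∀ z ∈ p.v, p.c z ≠ some n := by
  refine ⟨(p.v.sup fun z => (p.c z).getD 0) + 1, fun z hz h => ?_⟩
  have : (p.c z).getD 0 ≤ p.v.sup fun z => (p.c z).getD 0 :=
    Finset.le_sup (f := fun z => (p.c z).getD 0) hz
  rw [h] at this
  simp only [Option.getD_some] at this
  omega

/-! ### The generic single-node extension with a fresh ordinal -/

lemma step_fresh (Tc : Set Sseq) (hT : PAmbientOK Tc) (p : PCond) (hp : PValid Tc p)
    (σ : Sseq) (hσT : σ ∈ Tc) (hσu : σ ∉ p.u)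
    (hmeet : ∀ τ ∈ p.u, meetSeq σ τ ∈ p.u ∨ meetSeq σ τ = σ)
    (Zd Zu : Set Om)
    (hZd_v : ∀ y ∈ Zd, y ∈ p.v) (hZu_v : ∀ z ∈ Zu, z ∈ p.v)
    (hZd_ht : ∀ y ∈ Zd, htOf y < lg σ) (hZu_ht : ∀ z ∈ Zu, lg σ < htOf z)
    (hZd_cl : ∀ y y', p.lt y y' → y' ∈ Zd → y ∈ Zd)
    (hZu_cl : ∀ z z', p.lt z z' → z ∈ Zu → z' ∈ Zu)
    (hcross : ∀ y ∈ Zd, ∀ z ∈ Zu, p.lt y z)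
    (hZd_lin : ∀ y ∈ Zd, ∀ y' ∈ Zd, p.lt y y' ∨ p.lt y' y ∨ y = y')
    (hpred : ∀ z ∈ Zu, ∀ y, p.lt y z → y ∈ Zd ∨ y ∈ Zu)
    (hfd : ∀ τ ∈ p.u, seqLT τ σ → ∀ y, p.f τ = some y → y ∈ Zd)
    (hfu : ∀ τ ∈ p.u, seqLT σ τ → ∀ z, p.f τ = some z → z ∈ Zu) :
    ∃ q : PCond, PValid Tc q ∧ PLe p q ∧ q.u = insert σ p.u := by
  classical
  obtain ⟨a, hav, haht⟩ := exists_fresh (lg σ) (lg_lt_omega1 (hT.1 σ hσT)) p.v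
  obtain ⟨n, hn⟩ := exists_fresh_color p
  have haZd : a ∉ Zd := fun h => hav (hZd_v a h)
  have haZu : a ∉ Zu := fun h => hav (hZu_v a h)
  have hlta : ∀ x y, p.lt x y → x ≠ a ∧ y ≠ a := by
    intro x y h
    obtain ⟨h1, h2⟩ := hp.lt_dom x y h
    exact ⟨fun e => hav (e ▸ h1), fun e => hav (e ▸ h2)⟩
  refine ⟨⟨insert σ p.u, insert a p.v,
    fun x y => p.lt x y ∨ (y = a ∧ x ∈ Zd) ∨ (x = a ∧ y ∈ Zu),
    fun τ => if τ = σ then some a else p.f τ,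
    fun z => if z = a then some n else p.c z⟩, ?_, ?_, rfl⟩
  · constructor
    -- u_sub
    · intro ρ' h
      rcases Finset.mem_insert.mp h with rfl | h
      · exact hσT
      · exact hp.u_sub ρ' h
    -- u_root
    · exact Finset.mem_insert_of_mem hp.u_root
    -- u_meet
    · intro x hx y hy
      rcases Finset.mem_insert.mp hx with hx1 | hx2
      · rcases Finset.mem_insert.mp hy with hy1 | hy2
        · rw [hx1, hy1, meetSeq_self]; exact Finset.mem_insert_self _ _
        · rw [hx1]
          rcases hmeet y hy2 with h | h
          · exact Finset.mem_insert_of_mem h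
          · rw [h]; exact Finset.mem_insert_self _ _
      · rcases Finset.mem_insert.mp hy with hy1 | hy2
        · rw [hy1, meetSeq_comm]
          rcases hmeet x hx2 with h | h
          · exact Finset.mem_insert_of_mem h
          · rw [h]; exact Finset.mem_insert_self _ _
        · exact Finset.mem_insert_of_mem (hp.u_meet x hx2 y hy2)
    -- lt_dom
    · rintro x y (h | ⟨he, hx⟩ | ⟨he, hy⟩)
      · exact ⟨Finset.mem_insert_of_mem (hp.lt_dom x y h).1,
          Finset.mem_insert_of_mem (hp.lt_dom x y h).2⟩
      · exact ⟨Finset.mem_insert_of_mem (hZd_v x hx),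
          by rw [he]; exact Finset.mem_insert_self _ _⟩
      · exact ⟨by rw [he]; exact Finset.mem_insert_self _ _,
          Finset.mem_insert_of_mem (hZu_v y hy)⟩
    -- lt_irrefl
    · rintro x (h | ⟨he, hx⟩ | ⟨he, hx⟩)
      · exact hp.lt_irrefl x h
      · exact haZd (he ▸ hx)
      · exact haZu (he ▸ hx)
    -- lt_trans
    · rintro x y z hxy hyz
      rcases hxy with h1 | ⟨he1, hx1⟩ | ⟨he1, hy1⟩
      · rcases hyz with h2 | ⟨he2, hy2⟩ | ⟨he2, hz2⟩
        · exact Or.inl (hp.lt_trans x y z h1 h2)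
        · exact Or.inr (Or.inl ⟨he2, hZd_cl x y h1 hy2⟩)
        · exact absurd he2 (hlta x y h1).2
      · rcases hyz with h2 | ⟨he2, hy2⟩ | ⟨he2, hz2⟩
        · exact absurd he1 (hlta y z h2).1
        · exact absurd (he1 ▸ hy2) haZd
        · exact Or.inl (hcross x hx1 z hz2)
      · rcases hyz with h2 | ⟨he2, hy2⟩ | ⟨he2, hz2⟩
        · exact Or.inr (Or.inr ⟨he1, hZu_cl y z h2 hy1⟩)
        · exact absurd ((hZu_ht y hy1).trans (hZd_ht y hy2)) (lt_irrefl _)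
        · exact absurd (he2 ▸ hy1) haZu
    -- lt_ht
    · rintro x y (h | ⟨he, hx⟩ | ⟨he, hy⟩)
      · exact hp.lt_ht x y h
      · rw [he, haht]; exact hZd_ht x hx
      · rw [he, haht]; exact hZu_ht y hy
    -- lt_pred_linear
    · rintro x y c hxc hyc
      rcases hxc with h1 | ⟨he1, hx1⟩ | ⟨he1, hc1⟩
      · rcases hyc with h2 | ⟨he2, hy2⟩ | ⟨he2, hc2⟩
        · rcases hp.lt_pred_linear x y c h1 h2 with h | h | h
          · exact Or.inl (Or.inl h)
          · exact Or.inr (Or.inl (Or.inl h))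
          · exact Or.inr (Or.inr h)
        · exact absurd he2 (hlta x c h1).2
        · rcases hpred c hc2 x h1 with h | h
          · exact Or.inl (Or.inr (Or.inl ⟨he2, h⟩))
          · exact Or.inr (Or.inl (Or.inr (Or.inr ⟨he2, h⟩)))
      · rcases hyc with h2 | ⟨he2, hy2⟩ | ⟨he2, hc2⟩
        · exact absurd he1 (hlta y c h2).2
        · rcases hZd_lin x hx1 y hy2 with h | h | h
          · exact Or.inl (Or.inl h)
          · exact Or.inr (Or.inl (Or.inl h))
          · exact Or.inr (Or.inr h)
        · exact absurd (he1 ▸ hc2) haZu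
      · rcases hyc with h2 | ⟨he2, hy2⟩ | ⟨he2, hc2⟩
        · rcases hpred c hc1 y h2 with h | h
          · exact Or.inr (Or.inl (Or.inr (Or.inl ⟨he1, h⟩)))
          · exact Or.inl (Or.inr (Or.inr ⟨he1, h⟩))
        · exact absurd (he2 ▸ hc1) haZu
        · exact Or.inr (Or.inr (he1.trans he2.symm))
    -- f_dom
    · intro ρ'
      dsimp only
      by_cases h : ρ' = σ
      · subst h
        simp [Finset.mem_insert]
      · rw [if_neg h, hp.f_dom ρ']
        simp [Finset.mem_insert, h]
    -- f_ran
    · intro ρ' b h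
      dsimp only at h
      by_cases hb : ρ' = σ
      · rw [if_pos hb] at h
        rw [← Option.some_inj.mp h]
        exact Finset.mem_insert_self _ _
      · rw [if_neg hb] at h
        exact Finset.mem_insert_of_mem (hp.f_ran ρ' b h)
    -- f_surj
    · intro b hb
      rcases Finset.mem_insert.mp hb with rfl | hb
      · exact ⟨σ, Finset.mem_insert_self _ _, if_pos rfl⟩
      · obtain ⟨τ, hτ, hfτ⟩ := hp.f_surj b hb
        have : τ ≠ σ := fun e => hσu (e ▸ hτ)
        exact ⟨τ, Finset.mem_insert_of_mem hτ, by dsimp only; rw [if_neg this]; exact hfτ⟩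
    -- f_mono
    · intro x hx y hy hxy b1 b2 h1 h2
      dsimp only at h1 h2 ⊢
      by_cases hxσ : x = σ <;> by_cases hyσ : y = σ
      · rw [hxσ, hyσ] at hxy
        exact absurd rfl hxy.2
      · rw [if_pos hxσ] at h1
        rw [if_neg hyσ] at h2
        have hy' : y ∈ p.u := (Finset.mem_insert.mp hy).resolve_left hyσ
        have := hfu y hy' (hxσ ▸ hxy) b2 h2
        exact Or.inr (Or.inr ⟨(Option.some_inj.mp h1).symm, this⟩)
      · rw [if_pos hyσ] at h2
        rw [if_neg hxσ] at h1
        have hx' : x ∈ p.u := (Finset.mem_insert.mp hx).resolve_left hxσ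
        have := hfd x hx' (hyσ ▸ hxy) b1 h1
        exact Or.inr (Or.inl ⟨(Option.some_inj.mp h2).symm, this⟩)
      · rw [if_neg hxσ] at h1
        rw [if_neg hyσ] at h2
        exact Or.inl (hp.f_mono x ((Finset.mem_insert.mp hx).resolve_left hxσ)
          y ((Finset.mem_insert.mp hy).resolve_left hyσ) hxy b1 b2 h1 h2)
    -- f_ht
    · intro ρ' b h
      dsimp only at h
      by_cases hb : ρ' = σ
      · rw [if_pos hb] at h
        rw [← Option.some_inj.mp h, haht, hb]
      · rw [if_neg hb] at h
        exact hp.f_ht ρ' b h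
    -- c_dom
    · intro z
      dsimp only
      by_cases h : z = a
      · subst h
        simp [Finset.mem_insert]
      · rw [if_neg h, hp.c_dom]
        simp [Finset.mem_insert, h]
    -- c_spec
    · rintro x y hl
      dsimp only
      rcases hl with h | ⟨he, hx⟩ | ⟨he, hy⟩
      · rw [if_neg (hlta x y h).1, if_neg (hlta x y h).2]
        exact hp.c_spec x y h
      · rw [he, if_neg (fun e : x = a => hav (e ▸ hZd_v x hx)), if_pos rfl]
        exact fun e => hn x (hZd_v x hx) e
      · rw [he, if_neg (fun e : y = a => hav (e ▸ hZu_v y hy)), if_pos rfl]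
        exact fun e => hn y (hZu_v y hy) e.symm
  · refine ⟨Finset.subset_insert _ _, Finset.subset_insert _ _,
      fun x y h => Or.inl h, ?_, ?_⟩
    · intro ρ' b h
      have hne : ρ' ≠ σ := by
        intro e
        exact hσu (e ▸ ((hp.f_dom ρ').mp (by rw [h]; simp)))
      dsimp only
      rw [if_neg hne]; exact h
    · intro z m h
      have hne : z ≠ a := by
        intro e
        exact hav (e ▸ ((hp.c_dom z).mp (by rw [h]; simp)))
      dsimp only
      rw [if_neg hne]; exact h

/-! ### Single-node extension -/

lemma step (Tc : Set Sseq) (hT : PAmbientOK Tc) (p : PCond) (hp : PValid Tc p)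
    (σ : Sseq) (hσT : σ ∈ Tc) (hσu : σ ∉ p.u)
    (hmeet : ∀ τ ∈ p.u, meetSeq σ τ ∈ p.u ∨ meetSeq σ τ = σ) :
    ∃ q : PCond, PValid Tc q ∧ PLe p q ∧ q.u = insert σ p.u := by
  classical
  have hOK : ∀ τ ∈ p.u, IsSeqOK τ := fun τ h => hT.1 τ (hp.u_sub τ h)
  have hσOK : IsSeqOK σ := hT.1 σ hσT
  -- the nodes below σ
  set Bf : Finset Sseq := p.u.filter (fun τ => seqLT τ σ) with hBf
  have hBne : Bf.Nonempty := by
    refine ⟨emptySeq, Finset.mem_filter.mpr ⟨hp.u_root, ?_, ?_⟩⟩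
    · intro ξ a h
      exact (Option.some_ne_none a h.symm).elim
    · intro e
      exact hσu (e ▸ hp.u_root)
  -- the nodes above σ
  set Sf : Finset Sseq := p.u.filter (fun τ => seqLT σ τ) with hSf
  rcases Sf.eq_empty_or_nonempty with hSe | hSne
  · -- no nodes above σ : use the maximal node below σ
    obtain ⟨τm, hτm, hτmax⟩ := Bf.exists_max_image lg hBne
    have hτmu : τm ∈ p.u := (Finset.mem_filter.mp hτm).1
    have hτmσ : seqLT τm σ := (Finset.mem_filter.mp hτm).2
    obtain ⟨bm, hbm⟩ := Option.ne_none_iff_exists'.mp ((hp.f_dom τm).mpr hτmu)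
    have hbmht : htOf bm = lg τm := hp.f_ht τm bm hbm
    have hlgm : lg τm < lg σ := seqLT_lg_lt (hOK τm hτmu) hσOK hτmσ
    refine step_fresh Tc hT p hp σ hσT hσu hmeet
      {y | y = bm ∨ p.lt y bm} ∅ ?_ ?_ ?_ ?_ ?_ ?_ ?_ ?_ ?_ ?_ ?_
    · rintro y (rfl | h)
      · exact hp.f_ran τm y hbm
      · exact (hp.lt_dom y bm h).1
    · rintro z hz
      exact absurd hz (Set.notMem_empty z)
    · rintro y (rfl | h)
      · rw [hbmht]; exact hlgm
      · exact lt_trans (hbmht ▸ hp.lt_ht y bm h) hlgm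
    · rintro z hz
      exact absurd hz (Set.notMem_empty z)
    · rintro y y' h (rfl | h')
      · exact Or.inr h
      · exact Or.inr (hp.lt_trans y y' bm h h')
    · rintro z z' _ hz
      exact absurd hz (Set.notMem_empty z)
    · rintro y _ z hz
      exact absurd hz (Set.notMem_empty z)
    · rintro y (rfl | h) y' (rfl | h')
      · exact Or.inr (Or.inr rfl)
      · exact Or.inr (Or.inl h')
      · exact Or.inl h
      · exact hp.lt_pred_linear y y' bm h h'
    · rintro z hz
      exact absurd hz (Set.notMem_empty z)
    · intro τ hτ hτσ y hy
      by_cases he : τ = τm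
      · subst he
        rw [hbm] at hy
        exact Or.inl (Option.some_inj.mp hy).symm
      · have hcomp := seqLE_comparable (hOK τ hτ) (hOK τm hτmu) hτσ.1 hτmσ.1
        have hμB : τ ∈ Bf := Finset.mem_filter.mpr ⟨hτ, hτσ⟩
        rcases hcomp with hc | hc
        · exact Or.inr (hp.f_mono τ hτ τm hτmu ⟨hc, he⟩ y bm hy hbm)
        · exact absurd (seqLE_eq_of_lg_le (hOK τm hτmu) (hOK τ hτ) hc (hτmax τ hμB)).symm he
    · intro τ hτ hστ z hz
      have hm : τ ∈ Sf := Finset.mem_filter.mpr ⟨hτ, hστ⟩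
      rw [hSe] at hm
      exact absurd hm (Finset.notMem_empty τ)
  · -- there are nodes above σ
    obtain ⟨τ₀, hτ₀, hτmin⟩ := Sf.exists_min_image lg hSne
    have hτ₀u : τ₀ ∈ p.u := (Finset.mem_filter.mp hτ₀).1
    have hστ₀ : seqLT σ τ₀ := (Finset.mem_filter.mp hτ₀).2
    obtain ⟨b₀, hb₀⟩ := Option.ne_none_iff_exists'.mp ((hp.f_dom τ₀).mpr hτ₀u)
    have hb₀ht : htOf b₀ = lg τ₀ := hp.f_ht τ₀ b₀ hb₀
    have hlg0 : lg σ < lg τ₀ := seqLT_lg_lt hσOK (hOK τ₀ hτ₀u) hστ₀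
    -- τ₀ is the minimum of Sf
    have hmin : ∀ τ ∈ p.u, seqLT σ τ → seqLE τ₀ τ := by
      intro τ hτ hστ
      have hμu : meetSeq τ₀ τ ∈ p.u := hp.u_meet τ₀ hτ₀u τ hτ
      have hσμ : seqLE σ (meetSeq τ₀ τ) := le_meetSeq hσOK hστ₀.1 hστ.1
      have hσμ' : seqLT σ (meetSeq τ₀ τ) := ⟨hσμ, fun e => hσu (e ▸ hμu)⟩
      have hlgμ : lg τ₀ ≤ lg (meetSeq τ₀ τ) :=
        hτmin _ (Finset.mem_filter.mpr ⟨hμu, hσμ'⟩)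
      have : meetSeq τ₀ τ = τ₀ :=
        seqLE_eq_of_lg_le (hOK _ hμu) (hOK τ₀ hτ₀u) meetSeq_le_left hlgμ
      rw [← this]
      exact meetSeq_le_right
    -- images of nodes above σ
    have hfu_core : ∀ τ ∈ p.u, seqLT σ τ → ∀ z, p.f τ = some z → z = b₀ ∨ p.lt b₀ z := by
      intro τ hτ hστ z hz
      by_cases he : τ = τ₀
      · subst he
        rw [hb₀] at hz
        exact Or.inl (Option.some_inj.mp hz).symm
      · exact Or.inr (hp.f_mono τ₀ hτ₀u τ hτ ⟨hmin τ hτ hστ, fun e => he e.symm⟩ b₀ z hb₀ hz)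
    -- images of nodes below σ
    have hfd_core : ∀ τ ∈ p.u, seqLT τ σ → ∀ y, p.f τ = some y →
        p.lt y b₀ ∧ htOf y < lg σ := by
      intro τ hτ hτσ y hy
      refine ⟨hp.f_mono τ hτ τ₀ hτ₀u (seqLT_trans' hτσ hστ₀) y b₀ hy hb₀, ?_⟩
      rw [hp.f_ht τ y hy]
      exact seqLT_lg_lt (hOK τ hτ) hσOK hτσ
    by_cases hx : ∃ x, p.lt x b₀ ∧ htOf x = lg σ
    · -- reuse an existing ordinal x below b₀ at level lg σ
      obtain ⟨x, hxb, hxht⟩ := hx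
      have hxv : x ∈ p.v := (hp.lt_dom x b₀ hxb).1
      refine ⟨⟨insert σ p.u, p.v, p.lt,
        fun τ => if τ = σ then some x else p.f τ, p.c⟩, ?_, ?_, rfl⟩
      · constructor
        · intro ρ' h
          rcases Finset.mem_insert.mp h with rfl | h
          · exact hσT
          · exact hp.u_sub ρ' h
        · exact Finset.mem_insert_of_mem hp.u_root
        · intro x' hx' y' hy'
          rcases Finset.mem_insert.mp hx' with hx1 | hx2
          · rcases Finset.mem_insert.mp hy' with hy1 | hy2
            · rw [hx1, hy1, meetSeq_self]; exact Finset.mem_insert_self _ _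
            · rw [hx1]
              rcases hmeet y' hy2 with h | h
              · exact Finset.mem_insert_of_mem h
              · rw [h]; exact Finset.mem_insert_self _ _
          · rcases Finset.mem_insert.mp hy' with hy1 | hy2
            · rw [hy1, meetSeq_comm]
              rcases hmeet x' hx2 with h | h
              · exact Finset.mem_insert_of_mem h
              · rw [h]; exact Finset.mem_insert_self _ _
            · exact Finset.mem_insert_of_mem (hp.u_meet x' hx2 y' hy2)
        · exact hp.lt_dom
        · exact hp.lt_irrefl
        · exact hp.lt_trans
        · exact hp.lt_ht
        · exact hp.lt_pred_linear
        · intro ρ'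
          dsimp only
          by_cases h : ρ' = σ
          · subst h
            simp [Finset.mem_insert]
          · rw [if_neg h, hp.f_dom ρ']
            simp [Finset.mem_insert, h]
        · intro ρ' b h
          dsimp only at h
          by_cases hb : ρ' = σ
          · rw [if_pos hb] at h
            rw [← Option.some_inj.mp h]
            exact hxv
          · rw [if_neg hb] at h
            exact hp.f_ran ρ' b h
        · intro b hb
          obtain ⟨τ, hτ, hfτ⟩ := hp.f_surj b hb
          have : τ ≠ σ := fun e => hσu (e ▸ hτ)
          exact ⟨τ, Finset.mem_insert_of_mem hτ, by dsimp only; rw [if_neg this]; exact hfτ⟩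
        · intro x' hx' y' hy' hxy b1 b2 h1 h2
          dsimp only at h1 h2 ⊢
          by_cases hxσ : x' = σ <;> by_cases hyσ : y' = σ
          · rw [hxσ, hyσ] at hxy
            exact absurd rfl hxy.2
          · rw [if_pos hxσ] at h1
            rw [if_neg hyσ] at h2
            have hy'' : y' ∈ p.u := (Finset.mem_insert.mp hy').resolve_left hyσ
            have hb1 : b1 = x := (Option.some_inj.mp h1).symm
            rw [hb1]
            rcases hfu_core y' hy'' (hxσ ▸ hxy) b2 h2 with he | h
            · rw [he]; exact hxb
            · exact hp.lt_trans _ _ _ hxb h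
          · rw [if_pos hyσ] at h2
            rw [if_neg hxσ] at h1
            have hx'' : x' ∈ p.u := (Finset.mem_insert.mp hx').resolve_left hxσ
            have hb2 : b2 = x := (Option.some_inj.mp h2).symm
            rw [hb2]
            obtain ⟨hb1b, hb1ht⟩ := hfd_core x' hx'' (hyσ ▸ hxy) b1 h1
            rcases hp.lt_pred_linear b1 x b₀ hb1b hxb with h | h | h
            · exact h
            · exact absurd (hxht ▸ hp.lt_ht x b1 h) (not_lt.mpr (le_of_lt hb1ht))
            · exact absurd (h ▸ hb1ht) (by rw [hxht]; exact lt_irrefl _)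
          · rw [if_neg hxσ] at h1
            rw [if_neg hyσ] at h2
            exact hp.f_mono x' ((Finset.mem_insert.mp hx').resolve_left hxσ)
              y' ((Finset.mem_insert.mp hy').resolve_left hyσ) hxy b1 b2 h1 h2
        · intro ρ' b h
          dsimp only at h
          by_cases hb : ρ' = σ
          · rw [if_pos hb] at h
            rw [← Option.some_inj.mp h, hxht, hb]
          · rw [if_neg hb] at h
            exact hp.f_ht ρ' b h
        · exact hp.c_dom
        · exact hp.c_spec
      · refine ⟨Finset.subset_insert _ _, Finset.Subset.refl _, fun a b h => h, ?_,
          fun a n h => h⟩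
        intro ρ' b h
        have hne : ρ' ≠ σ := by
          intro e
          exact hσu (e ▸ ((hp.f_dom ρ').mp (by rw [h]; simp)))
        dsimp only
        rw [if_neg hne]; exact h
    · -- a genuinely fresh ordinal is needed
      push_neg at hx
      refine step_fresh Tc hT p hp σ hσT hσu hmeet
        {y | p.lt y b₀ ∧ htOf y < lg σ}
        {z | z = b₀ ∨ p.lt b₀ z ∨ ∃ w, p.lt w b₀ ∧ lg σ < htOf w ∧ (w = z ∨ p.lt w z)}
        ?_ ?_ ?_ ?_ ?_ ?_ ?_ ?_ ?_ ?_ ?_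
      · rintro y ⟨h, _⟩
        exact (hp.lt_dom y b₀ h).1
      · rintro z (he | h | ⟨w, hw, _, hwz⟩)
        · rw [he]; exact hp.f_ran τ₀ b₀ hb₀
        · exact (hp.lt_dom b₀ z h).2
        · rcases hwz with he | hwz
          · rw [← he]; exact (hp.lt_dom w b₀ hw).1
          · exact (hp.lt_dom w z hwz).2
      · rintro y ⟨_, h⟩
        exact h
      · rintro z (he | h | ⟨w, hw, hwht, hwz⟩)
        · rw [he, hb₀ht]; exact hlg0
        · exact lt_trans (hb₀ht ▸ hlg0) (hp.lt_ht b₀ z h)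
        · rcases hwz with he | hwz
          · rw [← he]; exact hwht
          · exact lt_trans hwht (hp.lt_ht w z hwz)
      · rintro y y' h ⟨h1, h2⟩
        exact ⟨hp.lt_trans y y' b₀ h h1, lt_trans (hp.lt_ht y y' h) h2⟩
      · rintro z z' h (he | h1 | ⟨w, hw, hwht, hwz⟩)
        · exact Or.inr (Or.inl (he ▸ h))
        · exact Or.inr (Or.inl (hp.lt_trans b₀ z z' h1 h))
        · rcases hwz with he | hwz
          · exact Or.inr (Or.inr ⟨w, hw, hwht, Or.inr (he.symm ▸ h)⟩)
          · exact Or.inr (Or.inr ⟨w, hw, hwht, Or.inr (hp.lt_trans w z z' hwz h)⟩)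
      · rintro y ⟨hyb, hyht⟩ z (he | h | ⟨w, hw, hwht, hwz⟩)
        · rw [he]; exact hyb
        · exact hp.lt_trans y b₀ z hyb h
        · have hyw : p.lt y w := by
            rcases hp.lt_pred_linear y w b₀ hyb hw with h | h | h
            · exact h
            · exact absurd (lt_trans (hp.lt_ht w y h) hyht) (not_lt.mpr (le_of_lt hwht))
            · exact absurd (h ▸ hyht) (not_lt.mpr (le_of_lt hwht))
          rcases hwz with he | hwz
          · rw [← he]; exact hyw
          · exact hp.lt_trans y w z hyw hwz
      · rintro y ⟨h1, _⟩ y' ⟨h1', _⟩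
        exact hp.lt_pred_linear y y' b₀ h1 h1'
      · -- hpred
        have hpb : ∀ y, p.lt y b₀ → (y ∈ {y | p.lt y b₀ ∧ htOf y < lg σ} ∨
            y ∈ {z | z = b₀ ∨ p.lt b₀ z ∨ ∃ w, p.lt w b₀ ∧ lg σ < htOf w ∧ (w = z ∨ p.lt w z)}) := by
          intro y hyb
          rcases lt_trichotomy (htOf y) (lg σ) with h | h | h
          · exact Or.inl ⟨hyb, h⟩
          · exact absurd h (hx y hyb)
          · exact Or.inr (Or.inr (Or.inr ⟨y, hyb, h, Or.inl rfl⟩))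
        rintro z (he | h | ⟨w, hw, hwht, hwz⟩) y hyz
        · exact hpb y (he ▸ hyz)
        · rcases hp.lt_pred_linear y b₀ z hyz h with h' | h' | h'
          · exact hpb y h'
          · exact Or.inr (Or.inr (Or.inl h'))
          · exact Or.inr (Or.inl h')
        · rcases hwz with he | hwz
          · exact hpb y (hp.lt_trans y w b₀ (he.symm ▸ hyz) hw)
          · rcases hp.lt_pred_linear y w z hyz hwz with h' | h' | h'
            · exact hpb y (hp.lt_trans y w b₀ h' hw)
            · exact Or.inr (Or.inr (Or.inr ⟨w, hw, hwht, Or.inr h'⟩))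
            · exact Or.inr (Or.inr (Or.inr ⟨w, hw, hwht, Or.inl h'.symm⟩))
      · intro τ hτ hτσ y hy
        exact hfd_core τ hτ hτσ y hy
      · intro τ hτ hστ z hz
        rcases hfu_core τ hτ hστ z hz with rfl | h
        · exact Or.inl rfl
        · exact Or.inr (Or.inl h)

lemma PLe_refl (p : PCond) : PLe p p :=
  ⟨Finset.Subset.refl _, Finset.Subset.refl _, fun _ _ h => h, fun _ _ h => h, fun _ _ h => h⟩

lemma PLe_trans {p q r : PCond} (h1 : PLe p q) (h2 : PLe q r) : PLe p r :=
  ⟨h1.1.trans h2.1, h1.2.1.trans h2.2.1,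
    fun a b h => h2.2.2.1 a b (h1.2.2.1 a b h),
    fun ρ a h => h2.2.2.2.1 ρ a (h1.2.2.2.1 ρ a h),
    fun a n h => h2.2.2.2.2 a n (h1.2.2.2.2 a n h)⟩

/-- For every `ρ ∈ T`, the set `ℰ_ρ` of conditions with `ρ ∈ uᵖ` is dense in `P(T)`. -/
theorem PCond_dense (Tc : Set Sseq) (hT : PAmbientOK Tc) (ρ : Sseq) (hρ : ρ ∈ Tc) :
    ∀ p : PCond, PValid Tc p →
      ∃ q : PCond, PValid Tc q ∧ PLe p q ∧ ρ ∈ q.u := by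
  classical
  have hρOK : IsSeqOK ρ := hT.1 ρ hρ
  suffices H : ∀ n : ℕ, ∀ p : PCond, PValid Tc p →
      (((insert ρ p.u).image (fun τ => meetSeq ρ τ)) \ p.u).card ≤ n →
      ∃ q : PCond, PValid Tc q ∧ PLe p q ∧ ρ ∈ q.u by
    intro p hp
    exact H _ p hp le_rfl
  intro n
  induction n with
  | zero =>
    intro p hp hcard
    refine ⟨p, hp, PLe_refl p, ?_⟩
    have hmem : ρ ∈ (insert ρ p.u).image (fun τ => meetSeq ρ τ) :=
      Finset.mem_image.mpr ⟨ρ, Finset.mem_insert_self _ _, meetSeq_self ρ⟩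
    by_contra hρu
    have : ρ ∈ ((insert ρ p.u).image (fun τ => meetSeq ρ τ)) \ p.u :=
      Finset.mem_sdiff.mpr ⟨hmem, hρu⟩
    have := Finset.card_pos.mpr ⟨ρ, this⟩
    omega
  | succ n ih =>
    intro p hp hcard
    by_cases hρu : ρ ∈ p.u
    · exact ⟨p, hp, PLe_refl p, hρu⟩
    · set Nmiss : Finset Sseq := ((insert ρ p.u).image (fun τ => meetSeq ρ τ)) \ p.u
        with hNmiss
      have hρN : ρ ∈ Nmiss := Finset.mem_sdiff.mpr
        ⟨Finset.mem_image.mpr ⟨ρ, Finset.mem_insert_self _ _, meetSeq_self ρ⟩, hρu⟩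
      obtain ⟨σ, hσN, hσmin⟩ := Nmiss.exists_min_image lg ⟨ρ, hρN⟩
      obtain ⟨hσim, hσu⟩ := Finset.mem_sdiff.mp hσN
      obtain ⟨τ₁, hτ₁, hσeq⟩ := Finset.mem_image.mp hσim
      have hτ₁T : τ₁ ∈ Tc := by
        rcases Finset.mem_insert.mp hτ₁ with rfl | h
        · exact hρ
        · exact hp.u_sub τ₁ h
      have hσT : σ ∈ Tc := hσeq ▸ meetSeq_mem hT hρ hτ₁T
      have hσOK : IsSeqOK σ := hT.1 σ hσT
      have hσρ : seqLE σ ρ := by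
        rw [← hσeq]
        exact meetSeq_le_left
      have hOKu : ∀ τ ∈ p.u, IsSeqOK τ := fun τ h => hT.1 τ (hp.u_sub τ h)
      -- σ can be added to p.u, keeping it closed under meets
      have hmeet : ∀ τ ∈ p.u, meetSeq σ τ ∈ p.u ∨ meetSeq σ τ = σ := by
        intro τ hτ
        have hτT : τ ∈ Tc := hp.u_sub τ hτ
        have hτOK : IsSeqOK τ := hT.1 τ hτT
        have hmT : meetSeq σ τ ∈ Tc := meetSeq_mem hT hσT hτT
        have hmOK : IsSeqOK (meetSeq σ τ) := hT.1 _ hmT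
        have hρτT : meetSeq ρ τ ∈ Tc := meetSeq_mem hT hρ hτT
        have hρτOK : IsSeqOK (meetSeq ρ τ) := hT.1 _ hρτT
        have hρτim : meetSeq ρ τ ∈ (insert ρ p.u).image (fun τ => meetSeq ρ τ) :=
          Finset.mem_image.mpr ⟨τ, Finset.mem_insert_of_mem hτ, rfl⟩
        -- if σ ≤ ρ ∧ τ then meetSeq σ τ = σ
        have key : seqLE σ (meetSeq ρ τ) → meetSeq σ τ = σ := by
          intro hle
          have hστ : seqLE σ τ := seqLE_trans hle meetSeq_le_right
          exact seqLE_antisymm meetSeq_le_left (le_meetSeq hσOK (seqLE_refl σ) hστ)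
        by_cases hin : meetSeq ρ τ ∈ p.u
        · rcases seqLE_comparable hσOK hρτOK hσρ meetSeq_le_left with hc | hc
          · exact Or.inr (key hc)
          · left
            have h1 : seqLE (meetSeq σ τ) (meetSeq ρ τ) :=
              le_meetSeq hmOK (seqLE_trans meetSeq_le_left hσρ) meetSeq_le_right
            have h2 : seqLE (meetSeq ρ τ) (meetSeq σ τ) :=
              le_meetSeq hρτOK hc meetSeq_le_right
            rw [seqLE_antisymm h1 h2]
            exact hin
        · have hN : meetSeq ρ τ ∈ Nmiss := Finset.mem_sdiff.mpr ⟨hρτim, hin⟩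
          have hlg : lg σ ≤ lg (meetSeq ρ τ) := hσmin _ hN
          rcases seqLE_comparable hσOK hρτOK hσρ meetSeq_le_left with hc | hc
          · exact Or.inr (key hc)
          · exact Or.inr (key ((seqLE_eq_of_lg_le hρτOK hσOK hc hlg) ▸ seqLE_refl _))
      obtain ⟨q, hq, hpq, hqu⟩ := step Tc hT p hp σ hσT hσu hmeet
      -- the new set of missing meets is strictly smaller
      have hsub : ((insert ρ q.u).image (fun τ => meetSeq ρ τ)) \ q.u ⊆ Nmiss.erase σ := by
        intro x hx
        obtain ⟨hxim, hxu⟩ := Finset.mem_sdiff.mp hx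
        rw [hqu] at hxu
        obtain ⟨τ, hτ, hxeq⟩ := Finset.mem_image.mp hxim
        refine Finset.mem_erase.mpr ⟨fun e => hxu (e ▸ Finset.mem_insert_self _ _), ?_⟩
        refine Finset.mem_sdiff.mpr ⟨?_, fun h => hxu (Finset.mem_insert_of_mem h)⟩
        rw [hqu] at hτ
        rcases Finset.mem_insert.mp hτ with he | hτ'
        · exact Finset.mem_image.mpr ⟨τ, by rw [he]; exact Finset.mem_insert_self _ _, hxeq⟩
        · rcases Finset.mem_insert.mp hτ' with he | hτ''
          · exfalso
            have hms : meetSeq ρ τ = τ := by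
              rw [he, meetSeq_comm]
              exact meetSeq_eq_left hσOK hσρ
            exact hxu (by rw [← hxeq, hms, he]; exact Finset.mem_insert_self _ _)
          · exact Finset.mem_image.mpr ⟨τ, Finset.mem_insert_of_mem hτ'', hxeq⟩
      have hcard' : (((insert ρ q.u).image (fun τ => meetSeq ρ τ)) \ q.u).card ≤ n := by
        have h1 := Finset.card_le_card hsub
        have h2 : (Nmiss.erase σ).card = Nmiss.card - 1 := Finset.card_erase_of_mem hσN
        have h3 : 1 ≤ Nmiss.card := Finset.card_pos.mpr ⟨σ, hσN⟩
        omega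
      obtain ⟨r, hr, hqr, hρr⟩ := ih q hq hcard'
      exact ⟨r, hr, PLe_trans hpq hqr, hρr⟩
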